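/- Let H be a real Hilbert space and (Ω, 𝒜, P) a probability space. Let J be a nonempty finite index set, let (λ_j)_{j∈J} be nonnegative reals with ∑_{j∈J} λ_j = 1, and for each j let F_j : H → ℝ be differentiable with β-Lipschitz gradient (β > 0). Let F = ∑_{j∈J} λ_j F_j, assume F is μ-strongly convex (μ > 0), and let w* be a minimizer of F. Let 0 < η ≤ 1/β, let w̄ ∈ H and (w_j)_{j∈J} ⊆ H, and set g = ∑_{j∈J} λ_j ∇F_j(w_j). Let n̄ : Ω → H be a random vector with E[‖n̄‖²] ≤ s² (s ≥ 0) and Bochner expectation E[n̄] = 0, and set W⁺ = w̄ − η(g + n̄). Assume F ∘ W⁺ is integrable. Then E[F(W⁺)] − F(w*) ≤ (1 − μη)(F(w̄) − F(w*)) + (ηβ²/2) ∑_{j∈J} λ_j ‖w̄ − w_j‖² + (η²β/2) s². -/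

import Mathlib

open scoped BigOperators
open RealInnerProductSpace MeasureTheory

/-- `g` is the gradient of `f` at `x` (via the Riesz embedding into the dual). -/
def HasGradAt {H : Type*} [NormedAddCommGroup H] [InnerProductSpace ℝ H]
    (f : H → ℝ) (g x : H) : Prop :=
  HasFDerivAt f (InnerProductSpace.toDualMap ℝ H g) x

set_option maxHeartbeats 1000000 in
lemma descent_lemma' {H : Type*} [NormedAddCommGroup H] [InnerProductSpace ℝ H]
    (f : H → ℝ) (gf : H → H) (β : ℝ) (hβ : 0 ≤ β)
    (hgrad : ∀ x, HasGradAt f (gf x) x)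
    (hlip : ∀ x y, ‖gf x - gf y‖ ≤ β * ‖x - y‖)
    (x y : H) : f y ≤ f x + ⟪gf x, y - x⟫ + β / 2 * ‖y - x‖ ^ 2 := by
  set d := y - x with hd
  have hcurve : ∀ s : ℝ, HasDerivAt (fun τ : ℝ => x + τ • d) d s := by
    intro s
    simpa using ((hasDerivAt_id s).smul_const d).const_add x
  have hφ : ∀ s : ℝ, HasDerivAt (fun τ : ℝ => f (x + τ • d)) ⟪gf (x + s • d), d⟫ s := by
    intro s
    have hg' := hgrad (x + s • d)
    unfold HasGradAt at hg'
    have h1 := hg'.comp_hasDerivAt s (hcurve s)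
    simp only [InnerProductSpace.toDualMap_apply_apply] at h1
    exact h1
  set ψ : ℝ → ℝ := fun τ => f (x + τ • d) - τ * ⟪gf x, d⟫ - β / 2 * ‖d‖ ^ 2 * τ ^ 2 with hψdef
  have hψ : ∀ s : ℝ, HasDerivAt ψ
      (⟪gf (x + s • d), d⟫ - ⟪gf x, d⟫ - β / 2 * ‖d‖ ^ 2 * (2 * s)) s := by
    intro s
    have h1 := (hφ s).sub ((hasDerivAt_id s).mul_const ⟪gf x, d⟫)
    have h2 := (hasDerivAt_pow 2 s).const_mul (β / 2 * ‖d‖ ^ 2)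
    have h3 := h1.sub h2
    convert h3 using 1
    · rfl
    · rfl
    · rfl
    ring
  have hanti : AntitoneOn ψ (Set.Icc (0:ℝ) 1) := by
    apply antitoneOn_of_deriv_nonpos (convex_Icc 0 1)
    · exact fun s _ => (hψ s).continuousAt.continuousWithinAt
    · intro s _
      exact (hψ s).differentiableAt.differentiableWithinAt
    · intro s hs
      rw [interior_Icc] at hs
      rw [(hψ s).deriv]
      have h1 : ⟪gf (x + s • d) - gf x, d⟫ ≤ ‖gf (x + s • d) - gf x‖ * ‖d‖ :=
        real_inner_le_norm _ _
      have h2 : ‖gf (x + s • d) - gf x‖ ≤ β * (s * ‖d‖) := by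
        have := hlip (x + s • d) x
        simpa [norm_smul, abs_of_nonneg hs.1.le] using this
      have h3 : ⟪gf (x + s • d), d⟫ - ⟪gf x, d⟫ = ⟪gf (x + s • d) - gf x, d⟫ :=
        (inner_sub_left _ _ _).symm
      have h4 : ‖gf (x + s • d) - gf x‖ * ‖d‖ ≤ β * (s * ‖d‖) * ‖d‖ :=
        mul_le_mul_of_nonneg_right h2 (norm_nonneg d)
      nlinarith [norm_nonneg d]
  have h01 := hanti (Set.left_mem_Icc.2 zero_le_one) (Set.right_mem_Icc.2 zero_le_one) zero_le_one
  simp only [hψdef] at h01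
  have e0 : x + (0:ℝ) • d = x := by simp
  have e1 : x + (1:ℝ) • d = y := by simp [hd]
  rw [e0, e1] at h01
  simp at h01
  linarith [h01]

set_option maxHeartbeats 1000000 in
/-- Conditional one-step bound of Theorem 1: an aggregated SGD step using the
exact weighted gradient at dispersed local models plus zero-mean noise with
second moment at most `s²` contracts the expected optimality gap by `(1 − μη)`
up to dispersion and noise penalty terms. -/
theorem one_step_descent_sgd {H : Type*}
    [NormedAddCommGroup H] [InnerProductSpace ℝ H] [CompleteSpace H]
    {Ω : Type*} [MeasurableSpace Ω] (P : Measure Ω) [IsProbabilityMeasure P]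
    {ι : Type*} (t : Finset ι) (ht : t.Nonempty)
    (lam : ι → ℝ) (hlam : ∀ j ∈ t, 0 ≤ lam j) (hsum : ∑ j ∈ t, lam j = 1)
    (β : ℝ) (hβ : 0 < β)
    (F : ι → H → ℝ) (G : ι → H → H)
    (hgrad : ∀ j ∈ t, ∀ w, HasGradAt (F j) (G j w) w)
    (hlip : ∀ j ∈ t, ∀ w₁ w₂, ‖G j w₁ - G j w₂‖ ≤ β * ‖w₁ - w₂‖)
    (μ : ℝ) (hμ : 0 < μ)
    (Ftot : H → ℝ) (hF : Ftot = fun w => ∑ j ∈ t, lam j * F j w)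
    (Gtot : H → H) (hG : Gtot = fun w => ∑ j ∈ t, lam j • G j w)
    (hsc : ∀ w₁ w₂ : H,
      Ftot w₂ + ⟪Gtot w₂, w₁ - w₂⟫ + μ / 2 * ‖w₁ - w₂‖ ^ 2 ≤ Ftot w₁)
    (wstar : H) (hmin : ∀ w, Ftot wstar ≤ Ftot w)
    (η : ℝ) (hη0 : 0 < η) (hη : η ≤ 1 / β)
    (wbar : H) (w : ι → H)
    (g : H) (hg : g = ∑ j ∈ t, lam j • G j (w j))
    (s : ℝ) (hs : 0 ≤ s)
    (nbar : Ω → H)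
    (hnL2 : MemLp nbar 2 P)
    (hnvar : ∫ ω, ‖nbar ω‖ ^ 2 ∂P ≤ s ^ 2)
    (hnmean : ∫ ω, nbar ω ∂P = 0)
    (Wplus : Ω → H) (hplus : Wplus = fun ω => wbar - η • (g + nbar ω))
    (hint : Integrable (fun ω => Ftot (Wplus ω)) P) :
    (∫ ω, Ftot (Wplus ω) ∂P) - Ftot wstar ≤
      (1 - μ * η) * (Ftot wbar - Ftot wstar)
        + η * β ^ 2 / 2 * ∑ j ∈ t, lam j * ‖wbar - w j‖ ^ 2
        + η ^ 2 * β / 2 * s ^ 2 := by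
  -- gradient of the total objective
  have hFgrad : ∀ x, HasGradAt Ftot (Gtot x) x := by
    intro x
    unfold HasGradAt
    have hsum' : HasFDerivAt (fun w => ∑ j ∈ t, lam j * F j w)
        (∑ j ∈ t, lam j • (InnerProductSpace.toDualMap ℝ H (G j x) : H →L[ℝ] ℝ)) x := by
      apply HasFDerivAt.fun_sum
      intro j hj
      have h1 := hgrad j hj x
      unfold HasGradAt at h1
      exact h1.const_mul (lam j)
    rw [hF, hG]
    convert hsum' using 1
    ext v
    simp [InnerProductSpace.toDualMap_apply_apply, sum_inner, real_inner_smul_left,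
      ContinuousLinearMap.sum_apply, ContinuousLinearMap.smul_apply]
  -- Lipschitzness of the total gradient
  have hGlip : ∀ w₁ w₂ : H, ‖Gtot w₁ - Gtot w₂‖ ≤ β * ‖w₁ - w₂‖ := by
    intro w₁ w₂
    simp only [hG]
    rw [← Finset.sum_sub_distrib]
    refine (norm_sum_le _ _).trans ?_
    have step : ∀ j ∈ t, ‖lam j • G j w₁ - lam j • G j w₂‖ ≤ lam j * (β * ‖w₁ - w₂‖) := by
      intro j hj
      rw [← smul_sub, norm_smul, Real.norm_eq_abs, abs_of_nonneg (hlam j hj)]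
      exact mul_le_mul_of_nonneg_left (hlip j hj w₁ w₂) (hlam j hj)
    calc ∑ j ∈ t, ‖lam j • G j w₁ - lam j • G j w₂‖
        ≤ ∑ j ∈ t, lam j * (β * ‖w₁ - w₂‖) := Finset.sum_le_sum step
      _ = β * ‖w₁ - w₂‖ := by rw [← Finset.sum_mul, hsum, one_mul]
  set h : H := Gtot wbar with hh
  set S : ℝ := ∑ j ∈ t, lam j * ‖wbar - w j‖ ^ 2 with hS
  set V : ℝ := ∫ ω, ‖nbar ω‖ ^ 2 ∂P with hV
  -- pointwise descent bound
  set c : H := (β * η ^ 2) • g - η • h with hc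
  have hexp : ∀ ω : Ω, ⟪c, nbar ω⟫ = β * η ^ 2 * ⟪g, nbar ω⟫ - η * ⟪h, nbar ω⟫ := by
    intro ω
    rw [hc, inner_sub_left, real_inner_smul_left, real_inner_smul_left]
  have hpt : ∀ ω, Ftot (Wplus ω) ≤
      (Ftot wbar - η * ⟪h, g⟫ + β * η ^ 2 / 2 * ‖g‖ ^ 2) + ⟪c, nbar ω⟫
        + β * η ^ 2 / 2 * ‖nbar ω‖ ^ 2 := by
    intro ω
    have hd := descent_lemma' Ftot Gtot β hβ.le hFgrad hGlip wbar (Wplus ω)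
    have hdiff : Wplus ω - wbar = -(η • (g + nbar ω)) := by
      rw [hplus]
      exact sub_sub_cancel_left _ _
    have e : ⟪h, Wplus ω - wbar⟫ + β / 2 * ‖Wplus ω - wbar‖ ^ 2 =
        -(η * ⟪h, g⟫) - η * ⟪h, nbar ω⟫ + β * η ^ 2 / 2 * ‖g‖ ^ 2
          + β * η ^ 2 * ⟪g, nbar ω⟫ + β * η ^ 2 / 2 * ‖nbar ω‖ ^ 2 := by
      rw [hdiff, inner_neg_right, real_inner_smul_right, inner_add_right, norm_neg,
        norm_smul, Real.norm_eq_abs, abs_of_nonneg hη0.le, mul_pow, norm_add_sq_real]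
      ring
    have e2 := hexp ω
    linarith [hd, e, e2]
  -- integrability
  have hn1 : Integrable nbar P := hnL2.integrable one_le_two
  have hip_c : Integrable (fun ω => ⟪c, nbar ω⟫) P := hn1.const_inner c
  have hnsq : Integrable (fun ω => ‖nbar ω‖ ^ 2) P := hnL2.norm.integrable_sq
  have hB1 : Integrable (fun ω =>
      (Ftot wbar - η * ⟪h, g⟫ + β * η ^ 2 / 2 * ‖g‖ ^ 2) + ⟪c, nbar ω⟫
        + β * η ^ 2 / 2 * ‖nbar ω‖ ^ 2) P :=
    ((integrable_const _).add hip_c).add (hnsq.const_mul (β * η ^ 2 / 2))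
  have hInt : ∫ ω, ((Ftot wbar - η * ⟪h, g⟫ + β * η ^ 2 / 2 * ‖g‖ ^ 2) + ⟪c, nbar ω⟫
        + β * η ^ 2 / 2 * ‖nbar ω‖ ^ 2) ∂P =
      Ftot wbar - η * ⟪h, g⟫ + β * η ^ 2 / 2 * ‖g‖ ^ 2 + β * η ^ 2 / 2 * V := by
    have J1 : ∫ ω, ((Ftot wbar - η * ⟪h, g⟫ + β * η ^ 2 / 2 * ‖g‖ ^ 2) + ⟪c, nbar ω⟫
          + β * η ^ 2 / 2 * ‖nbar ω‖ ^ 2) ∂P =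
        (∫ ω, ((Ftot wbar - η * ⟪h, g⟫ + β * η ^ 2 / 2 * ‖g‖ ^ 2) + ⟪c, nbar ω⟫) ∂P)
          + ∫ ω, β * η ^ 2 / 2 * ‖nbar ω‖ ^ 2 ∂P :=
      integral_add ((integrable_const _).add hip_c) (hnsq.const_mul _)
    have J2 : ∫ ω, ((Ftot wbar - η * ⟪h, g⟫ + β * η ^ 2 / 2 * ‖g‖ ^ 2) + ⟪c, nbar ω⟫) ∂P =
        (∫ _ω, (Ftot wbar - η * ⟪h, g⟫ + β * η ^ 2 / 2 * ‖g‖ ^ 2) ∂P)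
          + ∫ ω, ⟪c, nbar ω⟫ ∂P :=
      integral_add (integrable_const _) hip_c
    have J3 : ∫ ω, ⟪c, nbar ω⟫ ∂P = 0 := by
      rw [integral_inner hn1, hnmean, inner_zero_right]
    have J4 : ∫ ω, β * η ^ 2 / 2 * ‖nbar ω‖ ^ 2 ∂P = β * η ^ 2 / 2 * V := by
      rw [integral_const_mul, ← hV]
    rw [J1, J2, J3, J4, integral_const]
    simp [measure_univ]
  have step : ∫ ω, Ftot (Wplus ω) ∂P ≤
      Ftot wbar - η * ⟪h, g⟫ + β * η ^ 2 / 2 * ‖g‖ ^ 2 + β * η ^ 2 / 2 * V := by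
    rw [← hInt]
    exact integral_mono hint hB1 hpt
  -- deterministic facts
  have hD0 : 0 ≤ Ftot wbar - Ftot wstar := sub_nonneg.2 (hmin wbar)
  have hβη : β * η ^ 2 ≤ η := by
    have h1 : η * β ≤ 1 := by
      rw [le_div_iff₀ hβ] at hη
      exact hη
    nlinarith [hη0.le]
  -- PL inequality from strong convexity
  have hPL : 2 * μ * (Ftot wbar - Ftot wstar) ≤ ‖h‖ ^ 2 := by
    have h1 := hsc wstar wbar
    have h3 : ⟪h, wstar - wbar⟫ = -⟪h, wbar - wstar⟫ := by
      rw [show wstar - wbar = -(wbar - wstar) from (neg_sub _ _).symm, inner_neg_right]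
    have h4 : ‖wstar - wbar‖ = ‖wbar - wstar‖ := norm_sub_rev _ _
    rw [← hh, h3, h4] at h1
    have h2 : ⟪h, wbar - wstar⟫ ≤ ‖h‖ * ‖wbar - wstar‖ := real_inner_le_norm _ _
    nlinarith [sq_nonneg (μ * ‖wbar - wstar‖ - ‖h‖), hμ]
  -- dispersion bound
  have hT0 : 0 ≤ ∑ j ∈ t, lam j * ‖wbar - w j‖ :=
    Finset.sum_nonneg fun j hj => mul_nonneg (hlam j hj) (norm_nonneg _)
  have hdisp : ‖g - h‖ ^ 2 ≤ β ^ 2 * S := by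
    have hnrm : ‖g - h‖ ≤ β * ∑ j ∈ t, lam j * ‖wbar - w j‖ := by
      simp only [hg, hh, hG]
      rw [← Finset.sum_sub_distrib, Finset.mul_sum]
      refine (norm_sum_le _ _).trans (Finset.sum_le_sum ?_)
      intro j hj
      rw [← smul_sub, norm_smul, Real.norm_eq_abs, abs_of_nonneg (hlam j hj)]
      calc lam j * ‖G j (w j) - G j wbar‖
          ≤ lam j * (β * ‖w j - wbar‖) :=
            mul_le_mul_of_nonneg_left (hlip j hj _ _) (hlam j hj)
        _ = β * (lam j * ‖wbar - w j‖) := by rw [norm_sub_rev]; ring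
    have hcs : (∑ j ∈ t, lam j * ‖wbar - w j‖) ^ 2 ≤ S := by
      have := Finset.sum_sq_le_sum_mul_sum_of_sq_eq_mul t
        (r := fun j => lam j * ‖wbar - w j‖) (f := fun j => lam j)
        (g := fun j => lam j * ‖wbar - w j‖ ^ 2) hlam
        (fun j hj => mul_nonneg (hlam j hj) (sq_nonneg _))
        (fun j hj => by ring)
      rw [hsum, one_mul] at this
      exact this
    nlinarith [hnrm, hcs, norm_nonneg (g - h), mul_nonneg hβ.le hT0]
  have hkey : -(η * ⟪h, g⟫) + η / 2 * ‖g‖ ^ 2 = η / 2 * ‖g - h‖ ^ 2 - η / 2 * ‖h‖ ^ 2 := by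
    rw [norm_sub_sq_real, real_inner_comm g h]
    ring
  have e1 : β * η ^ 2 / 2 * ‖g‖ ^ 2 ≤ η / 2 * ‖g‖ ^ 2 := by
    nlinarith [mul_nonneg (sub_nonneg.2 hβη) (sq_nonneg ‖g‖)]
  have e2 : η / 2 * ‖g - h‖ ^ 2 ≤ η / 2 * (β ^ 2 * S) :=
    mul_le_mul_of_nonneg_left hdisp (by positivity)
  have e3 : η / 2 * (2 * μ * (Ftot wbar - Ftot wstar)) ≤ η / 2 * ‖h‖ ^ 2 :=
    mul_le_mul_of_nonneg_left hPL (by positivity)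
  have e4 : β * η ^ 2 / 2 * V ≤ η ^ 2 * β / 2 * s ^ 2 := by
    calc β * η ^ 2 / 2 * V ≤ β * η ^ 2 / 2 * s ^ 2 :=
          mul_le_mul_of_nonneg_left hnvar (by positivity)
      _ = η ^ 2 * β / 2 * s ^ 2 := by ring
  linarith [step, e1, e2, e3, e4, hkey]
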